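/- arXiv:2001.00763 — 2 statements merged into one kernel-verified Lean document; each statement's English description precedes it below -/
import Mathlib

section
/- Let G be a graph on n ≥ 3 vertices and for each vertex v of G let G_v denote the induced subgraph of G on the remaining n−1 vertices. Then η(G) ≥ min over vertices v of η(G_v), where η(H) := ν*(H)/(|H|·(|H|−1)). -/
open Finset
open scoped Classical

variable {V : Type*}

/-- A triangle packing of `G`: a finite collection of triangles (3-cliques) of `G` that are
pairwise edge-disjoint (i.e. any two distinct members share at most one vertex). -/
def SimpleGraph.IsTrianglePacking [DecidableEq V] (G : SimpleGraph V)
    (P : Finset (Finset V)) : Prop :=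
  (∀ T ∈ P, G.IsNClique 3 T) ∧
    (P : Set (Finset V)).Pairwise fun S T => (S ∩ T).card ≤ 1

/-- The maximum size (number of edges, i.e. `3 * number of triangles`) of a triangle packing. -/
noncomputable def SimpleGraph.triangleNu [DecidableEq V] (G : SimpleGraph V) : ℕ :=
  sSup {m | ∃ P : Finset (Finset V), G.IsTrianglePacking P ∧ m = 3 * P.card}

/-- A fractional triangle packing of `G`: a weight function on triples of vertices, supported
on triangles of `G`, with values in `[0,1]`, such that every edge carries total weight ≤ 1. -/
def SimpleGraph.IsFracTrianglePacking [Fintype V] [DecidableEq V] (G : SimpleGraph V)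
    (w : Finset V → ℝ) : Prop :=
  (∀ T, 0 ≤ w T ∧ w T ≤ 1) ∧
  (∀ T, ¬ G.IsNClique 3 T → w T = 0) ∧
  ∀ u v : V, G.Adj u v →
    ∑ T ∈ univ.filter (fun T : Finset V => G.IsNClique 3 T ∧ u ∈ T ∧ v ∈ T), w T ≤ 1

/-- `ν*(G)`: the maximum size `3 ∑ w(T)` of a fractional triangle packing of `G`. -/
noncomputable def SimpleGraph.nuStar [Fintype V] [DecidableEq V] (G : SimpleGraph V) : ℝ :=
  sSup {x | ∃ w : Finset V → ℝ, G.IsFracTrianglePacking w ∧ x = 3 * ∑ T : Finset V, w T}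

/-- `η(G) = ν*(G)/(n(n-1))` where `n = |V(G)|`. -/
noncomputable def SimpleGraph.etaPack [Fintype V] [DecidableEq V] (G : SimpleGraph V) : ℝ :=
  G.nuStar / ((Fintype.card V : ℝ) * ((Fintype.card V : ℝ) - 1))

/-- A fractional triangle decomposition: a fractional packing with equality on every edge. -/
def SimpleGraph.IsFracTriangleDecomposition [Fintype V] [DecidableEq V] (G : SimpleGraph V)
    (w : Finset V → ℝ) : Prop :=
  G.IsFracTrianglePacking w ∧
  ∀ u v : V, G.Adj u v →
    ∑ T ∈ univ.filter (fun T : Finset V => G.IsNClique 3 T ∧ u ∈ T ∧ v ∈ T), w T = 1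

/-- `G` is `ε`-far from bipartite: every bipartite subgraph misses at least `ε n²` edges. -/
def FarFromBipartite [Fintype V] [DecidableEq V] (ε : ℝ) (G : SimpleGraph V) : Prop :=
  ∀ H : SimpleGraph V, H ≤ G → H.Colorable 2 →
    ε * (Fintype.card V : ℝ) ^ 2 ≤ (G.edgeFinset.card : ℝ) - (H.edgeFinset.card : ℝ)

/-- The disjoint union of two cliques on `⌈n/2⌉`-ish halves of `Fin n`
(the first `n/2` vertices form one clique, the rest form the other). -/
def twoCliques (n : ℕ) : SimpleGraph (Fin n) where
  Adj u v := u ≠ v ∧ ((u : ℕ) < n / 2 ↔ (v : ℕ) < n / 2)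
  symm := by refine ⟨?_⟩; intro u v h; exact ⟨h.1.symm, h.2.symm⟩
  loopless := by refine ⟨?_⟩; intro u h; exact h.1 rfl

/-- `g(n)`: minimum over co-triangle-free `n`-vertex graphs of the max triangle packing size. -/
noncomputable def gInt (n : ℕ) : ℕ :=
  sInf {m | ∃ G : SimpleGraph (Fin n), Gᶜ.CliqueFree 3 ∧ m = G.triangleNu}

/-- `g*(n)`: minimum over co-triangle-free `n`-vertex graphs of `ν*`. -/
noncomputable def gStar (n : ℕ) : ℝ :=
  sInf {x | ∃ G : SimpleGraph (Fin n), Gᶜ.CliqueFree 3 ∧ x = G.nuStar}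


/- ### Auxiliary lemmas -/

private lemma pack_zero {W : Type*} [Fintype W] [DecidableEq W] (H : SimpleGraph W) :
    H.IsFracTrianglePacking (fun _ => 0) :=
  ⟨fun _ => ⟨le_rfl, zero_le_one⟩, fun _ _ => rfl, fun _ _ _ => by simp⟩

private lemma nuStar_mem_le {W : Type*} [Fintype W] [DecidableEq W] (H : SimpleGraph W)
    {w : Finset W → ℝ} (hw : H.IsFracTrianglePacking w) :
    3 * ∑ T : Finset W, w T ≤ H.nuStar := by
  apply le_csSup
  · refine ⟨3 * (Fintype.card (Finset W) : ℝ), ?_⟩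
    rintro x ⟨w', hw', rfl⟩
    have h1 : ∑ T : Finset W, w' T ≤ ∑ _T : Finset W, (1:ℝ) :=
      Finset.sum_le_sum fun T _ => (hw'.1 T).2
    simp only [Finset.sum_const, Finset.card_univ, nsmul_eq_mul, mul_one] at h1
    linarith
  · exact ⟨w, hw, rfl⟩

private lemma nuStar_exists {W : Type*} [Fintype W] [DecidableEq W] (H : SimpleGraph W)
    {ε : ℝ} (hε : 0 < ε) :
    ∃ w : Finset W → ℝ, H.IsFracTrianglePacking w ∧ H.nuStar - ε < 3 * ∑ T : Finset W, w T := by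
  have hne : Set.Nonempty
      {x | ∃ w : Finset W → ℝ, H.IsFracTrianglePacking w ∧ x = 3 * ∑ T : Finset W, w T} :=
    ⟨0, fun _ => 0, pack_zero H, by simp⟩
  have hlt : H.nuStar - ε < sSup
      {x | ∃ w : Finset W → ℝ, H.IsFracTrianglePacking w ∧ x = 3 * ∑ T : Finset W, w T} := by
    rw [show sSup _ = H.nuStar from rfl]
    exact sub_lt_self _ hε
  obtain ⟨x, ⟨w, hw, rfl⟩, hx⟩ := exists_lt_of_lt_csSup hne hlt
  exact ⟨w, hw, hx⟩

private lemma clique_lift {W : Type*} (G : SimpleGraph W) (s : Set W)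
    (T' : Finset s) :
    (G.induce s).IsNClique 3 T' ↔
      G.IsNClique 3 (T'.map (Function.Embedding.subtype _)) := by
  constructor
  · rintro ⟨hc, hcard⟩
    refine ⟨?_, by simpa using hcard⟩
    rw [Finset.coe_map]
    rintro a ha b hb hab
    simp only [Function.Embedding.coe_subtype] at ha hb
    obtain ⟨a', ha', rfl⟩ := ha
    obtain ⟨b', hb', rfl⟩ := hb
    exact hc ha' hb' (fun h => hab (congrArg _ h))
  · rintro ⟨hc, hcard⟩
    refine ⟨?_, by simpa using hcard⟩
    rintro a ha b hb hab
    have ha' : (a : W) ∈ (↑(T'.map (Function.Embedding.subtype _)) : Set W) := by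
      rw [Finset.coe_map]
      exact Set.mem_image_of_mem _ ha
    have hb' : (b : W) ∈ (↑(T'.map (Function.Embedding.subtype _)) : Set W) := by
      rw [Finset.coe_map]
      exact Set.mem_of_mem_of_subset (Set.mem_image_of_mem _ hb) (by rfl)
    exact hc ha' hb' (Subtype.coe_injective.ne hab)


/-- `η(G) ≥ min_v η(G_v)`. -/
theorem stmt5 {V : Type*} [Fintype V] [DecidableEq V] (G : SimpleGraph V)
    (hn : 3 ≤ Fintype.card V) :
    (⨅ v : V, (G.induce ({v}ᶜ : Set V)).etaPack) ≤ G.etaPack := by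
  classical
  have hV : Nonempty V := by
    rw [← Fintype.card_pos_iff]; omega
  have hn3 : (3:ℝ) ≤ (Fintype.card V : ℝ) := by exact_mod_cast hn
  set nR : ℝ := (Fintype.card V : ℝ) with hnR
  -- cardinality of the vertex-deleted subgraphs
  have hcV : ∀ v : V, ((Fintype.card ({v}ᶜ : Set V) : ℝ)) = nR - 1 := by
    intro v
    have h1 : Fintype.card ({v}ᶜ : Set V) = Fintype.card V - 1 := by
      rw [Fintype.card_compl_set, Set.card_singleton]
    rw [h1, hnR]
    have : (1:ℕ) ≤ Fintype.card V := by omega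
    push_cast [Nat.cast_sub this]
    ring
  obtain ⟨v0, hv0⟩ := Finite.exists_min (fun v : V => (G.induce ({v}ᶜ : Set V)).etaPack)
  refine le_trans (ciInf_le (Finite.bddBelow_range _) v0) ?_
  set A := (G.induce ({v0}ᶜ : Set V)).nuStar with hA
  have hDpos : (0:ℝ) < (nR - 1) * (nR - 1 - 1) := by nlinarith
  have hetav : ∀ v : V, (G.induce ({v}ᶜ : Set V)).etaPack
      = (G.induce ({v}ᶜ : Set V)).nuStar / ((nR - 1) * (nR - 1 - 1)) := by
    intro v
    rw [SimpleGraph.etaPack, hcV v]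
  have hmono : ∀ v : V, A ≤ (G.induce ({v}ᶜ : Set V)).nuStar := by
    intro v
    have := hv0 v
    rw [hetav, hetav] at this
    exact (div_le_div_iff_of_pos_right hDpos).mp this
  -- The key averaging bound
  have KEY : ∀ ε : ℝ, 0 < ε → nR * (A - ε) ≤ (nR - 2) * G.nuStar := by
    intro ε hε
    choose w hwp hwlt using fun v : V => nuStar_exists (G.induce ({v}ᶜ : Set V)) hε
    -- the lifting maps
    set F : (v : V) → Finset ({v}ᶜ : Set V) → Finset V :=
      fun v T' => T'.map (Function.Embedding.subtype _) with hF
    have hFinj : ∀ v : V, Function.Injective (F v) := fun v => Finset.map_injective _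
    have hFmem : ∀ (v : V) (T' : Finset ({v}ᶜ : Set V)) (u : V),
        u ∈ F v T' ↔ ∃ h : u ∈ ({v}ᶜ : Set V), (⟨u, h⟩ : ({v}ᶜ : Set V)) ∈ T' := by
      intro v T' u
      simp only [hF, Finset.mem_map, Function.Embedding.coe_subtype]
      constructor
      · rintro ⟨a, ha, rfl⟩; exact ⟨a.2, by simpa using ha⟩
      · rintro ⟨h, ha⟩; exact ⟨⟨u, h⟩, ha, rfl⟩
    have hFnotmem : ∀ (v : V) (T' : Finset ({v}ᶜ : Set V)), v ∉ F v T' := by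
      intro v T' hv
      obtain ⟨h, -⟩ := (hFmem v T' v).mp hv
      exact h rfl
    set L : V → Finset V → ℝ :=
      fun v T => ∑ T' ∈ univ.filter (fun T' => F v T' = T), w v T' with hL
    have hL0 : ∀ v T, 0 ≤ L v T :=
      fun v T => Finset.sum_nonneg fun T' _ => ((hwp v).1 T').1
    have hL1 : ∀ v T, L v T ≤ 1 := by
      intro v T
      have hcard : (univ.filter (fun T' => F v T' = T)).card ≤ 1 := by
        refine Finset.card_le_one.mpr fun a ha b hb => ?_
        simp only [Finset.mem_filter] at ha hb
        exact hFinj v (ha.2.trans hb.2.symm)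
      calc L v T ≤ (univ.filter (fun T' => F v T' = T)).card • (1:ℝ) :=
            Finset.sum_le_card_nsmul _ _ _ fun T' _ => ((hwp v).1 T').2
        _ ≤ 1 := by
            rw [nsmul_eq_mul, mul_one]
            exact_mod_cast hcard
    have hLsupp : ∀ v T, ¬ G.IsNClique 3 T → L v T = 0 := by
      intro v T hT
      refine Finset.sum_eq_zero fun T' hT' => ?_
      simp only [Finset.mem_filter] at hT'
      refine (hwp v).2.1 T' fun hc => hT ?_
      rw [← hT'.2]
      exact (clique_lift G _ T').mp hc
    have hLmem : ∀ v T, v ∈ T → L v T = 0 := by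
      intro v T hv
      refine Finset.sum_eq_zero fun T' hT' => ?_
      simp only [Finset.mem_filter] at hT'
      exact absurd (hT'.2 ▸ hv) (hFnotmem v T')
    have hpos2 : (0:ℝ) < nR - 2 := by linarith
    have hinv : (0:ℝ) ≤ (nR - 2)⁻¹ := inv_nonneg.mpr (le_of_lt hpos2)
    set w' : Finset V → ℝ := fun T => (nR - 2)⁻¹ * ∑ v : V, L v T with hw'
    have hsum_le : ∀ T : Finset V, ∑ v : V, L v T ≤ nR - 2 := by
      intro T
      by_cases hT : G.IsNClique 3 T
      · have h1 : ∑ v : V, L v T = ∑ v ∈ univ \ T, L v T := by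
          refine (Finset.sum_subset (Finset.subset_univ _) fun v _ hv => ?_).symm
          rw [Finset.mem_sdiff, not_and, not_not] at hv
          exact hLmem v T (hv (Finset.mem_univ v))
        have h2 : (univ \ T).card = Fintype.card V - 3 := by
          rw [Finset.card_sdiff_of_subset (Finset.subset_univ _), Finset.card_univ, hT.2]
        calc ∑ v : V, L v T = ∑ v ∈ univ \ T, L v T := h1
          _ ≤ (univ \ T).card • (1:ℝ) :=
              Finset.sum_le_card_nsmul _ _ _ fun v _ => hL1 v T
          _ ≤ nR - 2 := by
              rw [nsmul_eq_mul, mul_one, h2, hnR]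
              push_cast [Nat.cast_sub hn]
              linarith
      · have : ∀ v ∈ (univ : Finset V), L v T = 0 := fun v _ => hLsupp v T hT
        rw [Finset.sum_eq_zero this]
        linarith
    have hpack : G.IsFracTrianglePacking w' := by
      refine ⟨fun T => ⟨?_, ?_⟩, fun T hT => ?_, fun u u' huv => ?_⟩
      · exact mul_nonneg hinv (Finset.sum_nonneg fun v _ => hL0 v T)
      · calc w' T ≤ (nR - 2)⁻¹ * (nR - 2) :=
              mul_le_mul_of_nonneg_left (hsum_le T) hinv
          _ = 1 := inv_mul_cancel₀ (ne_of_gt hpos2)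
      · simp only [hw']
        rw [Finset.sum_eq_zero fun v _ => hLsupp v T hT, mul_zero]
      · have hne : u ≠ u' := G.ne_of_adj huv
        set Aset := univ.filter (fun T : Finset V => G.IsNClique 3 T ∧ u ∈ T ∧ u' ∈ T) with hAset
        have hswap : ∑ T ∈ Aset, w' T = (nR - 2)⁻¹ * ∑ v : V, ∑ T ∈ Aset, L v T := by
          rw [← Finset.mul_sum, Finset.sum_comm]
        have hE0 : ∀ v : V, v ∈ ({u, u'} : Finset V) → ∑ T ∈ Aset, L v T = 0 := by
          intro v hv
          refine Finset.sum_eq_zero fun T hT => ?_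
          simp only [hAset, Finset.mem_filter] at hT
          rcases Finset.mem_insert.mp hv with rfl | hv
          · exact hLmem v T hT.2.2.1
          · rw [Finset.mem_singleton] at hv
            subst hv
            exact hLmem v T hT.2.2.2
        have hE1 : ∀ v : V, v ∉ ({u, u'} : Finset V) → ∑ T ∈ Aset, L v T ≤ 1 := by
          intro v hv
          simp only [Finset.mem_insert, Finset.mem_singleton, not_or] at hv
          have hu : u ∈ ({v}ᶜ : Set V) := by
            simp only [Set.mem_compl_iff, Set.mem_singleton_iff]
            exact fun h => hv.1 h.symm
          have hu' : u' ∈ ({v}ᶜ : Set V) := by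
            simp only [Set.mem_compl_iff, Set.mem_singleton_iff]
            exact fun h => hv.2 h.symm
          have hEq : ∑ T ∈ Aset, L v T
              = ∑ T' ∈ univ.filter (fun T' => F v T' ∈ Aset), w v T' :=
            Finset.sum_fiberwise_eq_sum_filter univ Aset (F v) (w v)
          rw [hEq]
          have hadj : (G.induce ({v}ᶜ : Set V)).Adj ⟨u, hu⟩ ⟨u', hu'⟩ := huv
          refine le_trans (Finset.sum_le_sum_of_subset_of_nonneg ?_
            fun T' _ _ => ((hwp v).1 T').1) ((hwp v).2.2 ⟨u, hu⟩ ⟨u', hu'⟩ hadj)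
          intro T' hT'
          simp only [Finset.mem_filter, Finset.mem_univ, true_and, hAset] at hT' ⊢
          obtain ⟨hcl, humem, hu'mem⟩ := hT'
          refine ⟨(clique_lift G _ T').mpr hcl, ?_, ?_⟩
          · obtain ⟨h, hm⟩ := (hFmem v T' u).mp humem
            convert hm using 2
          · obtain ⟨h, hm⟩ := (hFmem v T' u').mp hu'mem
            convert hm using 2
        have hcard2 : ((univ \ ({u, u'} : Finset V)).card : ℝ) = nR - 2 := by
          rw [Finset.card_sdiff_of_subset (Finset.subset_univ _), Finset.card_univ]
          have : ({u, u'} : Finset V).card = 2 := by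
            rw [Finset.card_insert_of_notMem (by simpa using hne), Finset.card_singleton]
          rw [this, hnR]
          push_cast [Nat.cast_sub (by omega : 2 ≤ Fintype.card V)]
          ring
        have hsum2 : ∑ v : V, ∑ T ∈ Aset, L v T ≤ nR - 2 := by
          have h1 : ∑ v : V, ∑ T ∈ Aset, L v T
              = ∑ v ∈ univ \ ({u, u'} : Finset V), ∑ T ∈ Aset, L v T := by
            refine (Finset.sum_subset (Finset.subset_univ _) fun v _ hv => ?_).symm
            rw [Finset.mem_sdiff, not_and, not_not] at hv
            exact hE0 v (hv (Finset.mem_univ v))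
          calc ∑ v : V, ∑ T ∈ Aset, L v T
              = ∑ v ∈ univ \ ({u, u'} : Finset V), ∑ T ∈ Aset, L v T := h1
            _ ≤ (univ \ ({u, u'} : Finset V)).card • (1:ℝ) :=
                Finset.sum_le_card_nsmul _ _ _ fun v hv =>
                  hE1 v (Finset.mem_sdiff.mp hv).2
            _ = nR - 2 := by rw [nsmul_eq_mul, mul_one, hcard2]
        calc ∑ T ∈ Aset, w' T = (nR - 2)⁻¹ * ∑ v : V, ∑ T ∈ Aset, L v T := hswap
          _ ≤ (nR - 2)⁻¹ * (nR - 2) := mul_le_mul_of_nonneg_left hsum2 hinv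
          _ = 1 := inv_mul_cancel₀ (ne_of_gt hpos2)
    -- total size
    have hfiber : ∀ v : V, ∑ T : Finset V, L v T = ∑ T' : Finset ({v}ᶜ : Set V), w v T' :=
      fun v => Finset.sum_fiberwise_of_maps_to (fun T' _ => Finset.mem_univ (F v T')) (w v)
    have hsize : (nR - 2) * (3 * ∑ T : Finset V, w' T)
        = ∑ v : V, (3 * ∑ T' : Finset ({v}ᶜ : Set V), w v T') := by
      have h1 : ∑ T : Finset V, w' T
          = (nR - 2)⁻¹ * ∑ v : V, ∑ T' : Finset ({v}ᶜ : Set V), w v T' := by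
        simp only [hw']
        rw [← Finset.mul_sum, Finset.sum_comm]
        congr 1
        exact Finset.sum_congr rfl fun v _ => hfiber v
      rw [h1, ← Finset.mul_sum]
      field_simp
    have h3 : 3 * ∑ T : Finset V, w' T ≤ G.nuStar := nuStar_mem_le G hpack
    have h2 : nR * (A - ε) ≤ ∑ v : V, (3 * ∑ T' : Finset ({v}ᶜ : Set V), w v T') := by
      have hterm : ∀ v : V, A - ε ≤ 3 * ∑ T' : Finset ({v}ᶜ : Set V), w v T' := by
        intro v
        have := hwlt v
        have := hmono v
        linarith
      calc nR * (A - ε) = ∑ _v : V, (A - ε) := by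
            rw [Finset.sum_const, Finset.card_univ, nsmul_eq_mul, hnR]
        _ ≤ _ := Finset.sum_le_sum fun v _ => hterm v
    have h4 : (nR - 2) * (3 * ∑ T : Finset V, w' T) ≤ (nR - 2) * G.nuStar :=
      mul_le_mul_of_nonneg_left h3 (le_of_lt hpos2)
    linarith [hsize ▸ h4]
  -- conclude from KEY
  have hmain : nR * A ≤ (nR - 2) * G.nuStar := by
    refine le_of_forall_pos_le_add fun δ hδ => ?_
    have hεpos : 0 < δ / nR := by positivity
    have := KEY (δ / nR) hεpos
    have hnRpos : (0:ℝ) < nR := by linarith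
    have : nR * A - δ ≤ (nR - 2) * G.nuStar := by
      have hexp : nR * (A - δ / nR) = nR * A - δ := by
        field_simp
      linarith [hexp ▸ this]
    linarith
  -- final arithmetic
  rw [hetav v0, SimpleGraph.etaPack, ← hA, ← hnR]
  rw [div_le_div_iff₀ hDpos (by nlinarith)]
  nlinarith [hmain]
end

section
/- Let n be even and let G be a graph obtained from the complete bipartite graph K_{n/2,n/2} by adding ℓ ≤ n/8 edges inside the two sides. Then ν(G) + ν(complement of G) ≤ 2·C(n/2,2) + 2ℓ ≤ n(n−1)/4, where ν denotes the maximum size of a triangle packing; that is, the largest monochromatic triangle packing in the 2-colouring of K_n given by G and its complement has size at most n(n−1)/4. -/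
open Finset
open scoped Classical

variable {V : Type*}

section AuxStmt14
variable [Fintype V] [DecidableEq V]

lemma aux_pairs_card_eq (H : SimpleGraph V) [DecidableRel H.Adj] :
    (univ.filter fun p : V × V => H.Adj p.1 p.2).card = 2 * H.edgeFinset.card := by
  have h1 : (univ.filter fun p : V × V => H.Adj p.1 p.2)
      = (univ : Finset H.Dart).image SimpleGraph.Dart.toProd := by
    ext p
    simp only [Finset.mem_filter, Finset.mem_univ, true_and, Finset.mem_image]
    constructor
    · intro h; exact ⟨⟨p, h⟩, rfl⟩
    · rintro ⟨d, rfl⟩; exact d.adj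
  rw [h1, Finset.card_image_of_injective _ SimpleGraph.Dart.toProd_injective,
    Finset.card_univ, SimpleGraph.dart_card_eq_twice_card_edges]

lemma aux_packing_card_le (H : SimpleGraph V) [DecidableRel H.Adj] (P : Finset (Finset V))
    (hP : H.IsTrianglePacking P) : 3 * P.card ≤ H.edgeFinset.card := by
  have hdisj : ∀ x ∈ P, ∀ y ∈ P, x ≠ y → Disjoint x.offDiag y.offDiag := by
    intro x hx y hy hxy
    rw [Finset.disjoint_left]
    intro p hpx hpy
    rw [Finset.mem_offDiag] at hpx hpy
    have h2 : ({p.1, p.2} : Finset V) ⊆ x ∩ y := by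
      intro v hv
      simp only [Finset.mem_insert, Finset.mem_singleton] at hv
      rcases hv with rfl | rfl <;> exact Finset.mem_inter.2 ⟨by tauto, by tauto⟩
    have h3 := Finset.card_le_card h2
    rw [Finset.card_pair hpx.2.2] at h3
    have h4 := hP.2 (Finset.mem_coe.2 hx) (Finset.mem_coe.2 hy) hxy
    omega
  have hsub : P.biUnion (fun T => T.offDiag) ⊆ univ.filter fun p : V × V => H.Adj p.1 p.2 := by
    intro p hp
    rw [Finset.mem_biUnion] at hp
    obtain ⟨T, hT, hpT⟩ := hp
    rw [Finset.mem_offDiag] at hpT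
    exact Finset.mem_filter.2 ⟨Finset.mem_univ _,
      (hP.1 T hT).1 (Finset.mem_coe.2 hpT.1) (Finset.mem_coe.2 hpT.2.1) hpT.2.2⟩
  have hcard : (P.biUnion fun T => T.offDiag).card = 6 * P.card := by
    rw [Finset.card_biUnion hdisj]
    rw [Finset.sum_congr rfl (fun T hT => by
      rw [Finset.offDiag_card, (hP.1 T hT).2]), Finset.sum_const, smul_eq_mul, mul_comm]
  have h5 := Finset.card_le_card hsub
  rw [hcard, aux_pairs_card_eq] at h5
  omega

lemma aux_triangleNu_le (H : SimpleGraph V) (k : ℕ)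
    (h : ∀ P : Finset (Finset V), H.IsTrianglePacking P → 3 * P.card ≤ k) :
    H.triangleNu ≤ k := by
  apply csSup_le
  · exact ⟨0, ∅, ⟨fun T hT => absurd hT (Finset.notMem_empty T), by simp⟩, by simp⟩
  · rintro m ⟨P, hP, rfl⟩; exact h P hP

end AuxStmt14

set_option maxHeartbeats 1000000

/-- adding `ℓ ≤ n/8` edges inside the sides of `K_{n/2,n/2}` yields a colouring
whose largest monochromatic triangle packing has size at most
`2·C(n/2,2) + 2ℓ ≤ n(n-1)/4`. -/
theorem stmt14 (n ℓ : ℕ) (hn : Even n) (E : SimpleGraph (Fin n))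
    (hE : E ≤ twoCliques n) (hcard : E.edgeFinset.card = ℓ) (hℓ : (ℓ : ℝ) ≤ (n : ℝ) / 8) :
    ((((twoCliques n)ᶜ ⊔ E).triangleNu : ℝ) + ((((twoCliques n)ᶜ ⊔ E)ᶜ).triangleNu : ℝ)
        ≤ 2 * ((n / 2).choose 2 : ℝ) + 2 * (ℓ : ℝ)) ∧
    2 * ((n / 2).choose 2 : ℝ) + 2 * (ℓ : ℝ) ≤ (n : ℝ) * ((n : ℝ) - 1) / 4 := by
  classical
  set G := (twoCliques n)ᶜ ⊔ E with hG
  set m := n / 2 with hm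
  -- ν(G) ≤ 3ℓ : every triangle of G contains an edge of E, and triangles are edge-disjoint
  have hnuG : G.triangleNu ≤ 3 * ℓ := by
    apply aux_triangleNu_le
    intro P hP
    have hPle : P.card ≤ ℓ := by
      rcases P.eq_empty_or_nonempty with rfl | ⟨T₀, hT₀⟩
      · simp
      have hT₀3 := (hP.1 T₀ hT₀).2
      obtain ⟨v₀, -⟩ := Finset.card_pos.1 (by omega : 0 < T₀.card)
      have key : ∀ T ∈ P, ∃ p : Fin n × Fin n, p.1 ∈ T ∧ p.2 ∈ T ∧ E.Adj p.1 p.2 := by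
        intro T hT
        obtain ⟨hclique, hcard3⟩ := hP.1 T hT
        obtain ⟨a, ha, b, hb, hne, hdec⟩ :=
          Finset.exists_ne_map_eq_of_card_lt_of_maps_to
            (t := (univ : Finset Bool)) (f := fun v : Fin n => decide ((v : ℕ) < n / 2))
            (by rw [hcard3]; simp) (fun v _ => Finset.mem_univ _)
        have hiff : ((a : ℕ) < n / 2 ↔ (b : ℕ) < n / 2) := by
          simpa [decide_eq_decide] using hdec
        have hadj : G.Adj a b :=
          hclique (Finset.mem_coe.2 ha) (Finset.mem_coe.2 hb) hne
        rw [hG, SimpleGraph.sup_adj] at hadj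
        rcases hadj with h | h
        · exact absurd ⟨hne, hiff⟩ h.2
        · exact ⟨(a, b), ha, hb, h⟩
      rw [← hcard]
      set f : Finset (Fin n) → Sym2 (Fin n) := fun T =>
        if h : ∃ p : Fin n × Fin n, p.1 ∈ T ∧ p.2 ∈ T ∧ E.Adj p.1 p.2
        then Sym2.mk h.choose.1 h.choose.2 else Sym2.mk v₀ v₀ with hf
      apply Finset.card_le_card_of_injOn f
      · intro T hT
        have h := key T hT
        rw [hf]
        simp only [dif_pos h]
        exact SimpleGraph.mem_edgeFinset.2 h.choose_spec.2.2
      · intro S hS T hT hfST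
        by_contra hne
        have hSk := key S hS
        have hTk := key T hT
        rw [hf] at hfST
        simp only [dif_pos hSk, dif_pos hTk] at hfST
        obtain ⟨hS1, hS2, hSadj⟩ := hSk.choose_spec
        obtain ⟨hT1, hT2, hTadj⟩ := hTk.choose_spec
        have hmem : hSk.choose.1 ∈ S ∩ T ∧ hSk.choose.2 ∈ S ∩ T := by
          rcases Sym2.mk_eq_mk_iff.1 hfST with h | h
          · exact ⟨Finset.mem_inter.2 ⟨hS1, by rw [h]; exact hT1⟩,
              Finset.mem_inter.2 ⟨hS2, by rw [h]; exact hT2⟩⟩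
          · have e1 : hSk.choose.1 = hTk.choose.2 :=
              (congrArg Prod.fst h).trans Prod.fst_swap
            have e2 : hSk.choose.2 = hTk.choose.1 :=
              (congrArg Prod.snd h).trans Prod.snd_swap
            exact ⟨Finset.mem_inter.2 ⟨hS1, by rw [e1]; exact hT2⟩,
              Finset.mem_inter.2 ⟨hS2, by rw [e2]; exact hT1⟩⟩
        have h2 : ({hSk.choose.1, hSk.choose.2} : Finset (Fin n)) ⊆ S ∩ T := by
          intro v hv
          simp only [Finset.mem_insert, Finset.mem_singleton] at hv
          rcases hv with rfl | rfl
          · exact hmem.1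
          · exact hmem.2
        have h3 := Finset.card_le_card h2
        rw [Finset.card_pair hSadj.ne] at h3
        have h4 := hP.2 hS hT hne
        omega
    omega
  -- ν(Gᶜ) ≤ |E(Gᶜ)|
  have hnuGc : Gᶜ.triangleNu ≤ Gᶜ.edgeFinset.card :=
    aux_triangleNu_le _ _ (fun P hP => aux_packing_card_le _ P hP)
  have hGc : Gᶜ = twoCliques n \ E := by
    rw [hG, compl_sup, compl_compl, ← sdiff_eq]
  have hEsub : E.edgeFinset ⊆ (twoCliques n).edgeFinset := SimpleGraph.edgeFinset_mono hE
  have hGcCard : Gᶜ.edgeFinset.card = (twoCliques n).edgeFinset.card - ℓ := by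
    have h1 : Gᶜ.edgeFinset = (twoCliques n).edgeFinset \ E.edgeFinset := by
      ext e
      simp only [SimpleGraph.mem_edgeFinset, Finset.mem_sdiff, hGc,
        SimpleGraph.edgeSet_sdiff, Set.mem_diff]
    rw [h1, Finset.card_sdiff_of_subset hEsub, hcard]
  have hℓle : ℓ ≤ (twoCliques n).edgeFinset.card := hcard ▸ Finset.card_le_card hEsub
  -- edge count of twoCliques
  have hTC : 2 * (twoCliques n).edgeFinset.card ≤ 2 * (m * (m - 1)) := by
    rw [← aux_pairs_card_eq]
    set L := univ.filter fun v : Fin n => (v : ℕ) < m with hLdef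
    set R := univ.filter fun v : Fin n => ¬ (v : ℕ) < m with hRdef
    have hLcard : L.card = m := by
      rcases Nat.eq_zero_or_pos n with hn0 | hpos
      · subst hn0; simp [hLdef, hm]
      · have hlt : m < n := Nat.div_lt_self hpos one_lt_two
        have hLIio : L = Finset.Iio (⟨m, hlt⟩ : Fin n) := by
          ext v; simp [hLdef, Fin.lt_def]
        rw [hLIio, Fin.card_Iio]
    have hRcard : R.card = m := by
      have hpn := Finset.card_filter_add_card_filter_not
        (s := (univ : Finset (Fin n))) (p := fun v : Fin n => (v : ℕ) < m)
      rw [Finset.card_univ, Fintype.card_fin, ← hLdef, ← hRdef] at hpn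
      obtain ⟨k, hk⟩ := hn
      have hmk : m = k := by omega
      omega
    have hsub2 : (univ.filter fun p : Fin n × Fin n => (twoCliques n).Adj p.1 p.2)
        ⊆ L.offDiag ∪ R.offDiag := by
      intro p hp
      simp only [Finset.mem_filter, Finset.mem_univ, true_and] at hp
      obtain ⟨hne, hiff⟩ := hp
      by_cases h1 : (p.1 : ℕ) < m
      · refine Finset.mem_union_left _ (Finset.mem_offDiag.2 ⟨?_, ?_, hne⟩)
        · simp [hLdef, h1]
        · simp only [hLdef, Finset.mem_filter, Finset.mem_univ, true_and]; omega
      · refine Finset.mem_union_right _ (Finset.mem_offDiag.2 ⟨?_, ?_, hne⟩)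
        · simp only [hRdef, Finset.mem_filter, Finset.mem_univ, true_and]; omega
        · simp only [hRdef, Finset.mem_filter, Finset.mem_univ, true_and]; omega
    have h6 := Finset.card_le_card hsub2
    have h7 := Finset.card_union_le L.offDiag R.offDiag
    rw [Finset.offDiag_card, Finset.offDiag_card, hLcard, hRcard] at h7
    have h8 : m * m - m = m * (m - 1) := by
      cases m with
      | zero => rfl
      | succ k => simp [Nat.mul_succ]
    omega
  have hchoose : 2 * m.choose 2 = m * (m - 1) := by
    rw [Nat.choose_two_right, Nat.mul_div_cancel' (Nat.even_mul_pred_self m).two_dvd]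
  have main : G.triangleNu + Gᶜ.triangleNu ≤ 2 * m.choose 2 + 2 * ℓ := by omega
  constructor
  · exact_mod_cast main
  · obtain ⟨k, hk⟩ := hn
    have hmk : m = k := by omega
    rw [Nat.cast_choose_two, hmk]
    have hkn : (n : ℝ) = 2 * (k : ℝ) := by rw [hk]; push_cast; ring
    rw [hkn] at hℓ ⊢
    linarith
end
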